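/- In SU_q(2), the element g⁻₁ = δ - sγ has group-like image in the quotient coalgebra C_s = SU_q(2)/J_s: Δ(δ - sγ) ≡ (δ - sγ) ⊗ (δ - sγ) modulo SU_q(2) ⊗ J_s. -/
import Mathlib


open scoped TensorProduct

/-- ξ = s(α² - q⁻¹β²) + (s²-1)q⁻¹αβ -/
def xiE {k A : Type*} [Field k] [Ring A] [Algebra k A] (q s : k) (α β : A) : A :=
  s • (α^2) - (s*q⁻¹) • (β^2) + ((s^2-1)*q⁻¹) • (α*β)

/-- η = s(qγ² - δ²) + (s²-1)γδ -/
def etaE {k A : Type*} [Field k] [Ring A] [Algebra k A] (q s : k) (γ δ : A) : A :=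
  (s*q) • (γ^2) - s • (δ^2) + (s^2-1) • (γ*δ)

/-- ζ = s(qαγ - βδ) + (s²-1)qβγ -/
def zetaE {k A : Type*} [Field k] [Ring A] [Algebra k A] (q s : k) (α β γ δ : A) : A :=
  (s*q) • (α*γ) - s • (β*δ) + ((s^2-1)*q) • (β*γ)

/-- The projector e_s = (1/(1+s²)) [[1-ζ, ξ],[-η, s²+q⁻²ζ]] -/
def esMat {k A : Type*} [Field k] [Ring A] [Algebra k A] (q s : k) (α β γ δ : A) :
    Matrix (Fin 2) (Fin 2) A :=
  (1+s^2)⁻¹ • !![1 - zetaE q s α β γ δ, xiE q s α β;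
                 -etaE q s γ δ, (s^2) • (1:A) + (q^2)⁻¹ • zetaE q s α β γ δ]

/-- The right ideal J_s = {ξ-s, η+s, ζ}·SU_q(2) -/
def Jideal {k A : Type*} [Field k] [Ring A] [Algebra k A] (q s : k) (α β γ δ : A) : Set A :=
  {z | ∃ p₁ p₂ p₃ : A, z = (xiE q s α β - s • 1) * p₁ + (etaE q s γ δ + s • 1) * p₂ +
      zetaE q s α β γ δ * p₃}

theorem stmt9 {k A : Type*} [Field k] [Ring A] [Algebra k A]
    (q s : k) (α β γ δ : A)
    (h1 : α*β = q • (β*α)) (h2 : α*γ = q • (γ*α)) (h3 : β*γ = γ*β)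
    (h4 : β*δ = q • (δ*β)) (h5 : γ*δ = q • (δ*γ))
    (h6 : α*δ = δ*α + (q - q⁻¹) • (β*γ)) (h7 : α*δ - q • (β*γ) = 1)
    (hq : q ≠ 0) (Δ : A →ₐ[k] A ⊗[k] A)
    (hΔα : Δ α = α ⊗ₜ[k] α + β ⊗ₜ[k] γ) (hΔβ : Δ β = α ⊗ₜ[k] β + β ⊗ₜ[k] δ)
    (hΔγ : Δ γ = γ ⊗ₜ[k] α + δ ⊗ₜ[k] γ) (hΔδ : Δ δ = γ ⊗ₜ[k] β + δ ⊗ₜ[k] δ) :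
    Δ (δ - s • γ) - (δ - s • γ) ⊗ₜ[k] (δ - s • γ) ∈ Submodule.span k {x : A ⊗[k] A | ∃ p z : A, z ∈ Jideal q s α β γ δ ∧ x = p ⊗ₜ[k] z} := by
  classical
  -- scalar commutation lemmas
  have hγα : γ*α = q⁻¹ • (α*γ) := by
    rw [h2, smul_smul, inv_mul_cancel₀ hq, one_smul]
  have hβα : β*α = q⁻¹ • (α*β) := by
    rw [h1, smul_smul, inv_mul_cancel₀ hq, one_smul]
  have hδβ : δ*β = q⁻¹ • (β*δ) := by
    rw [h4, smul_smul, inv_mul_cancel₀ hq, one_smul]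
  have hαδ : α*δ = 1 + q • (β*γ) := by
    have := sub_eq_iff_eq_add.mp h7
    rw [this, add_comm]
  have hδα : δ*α = 1 + q⁻¹ • (β*γ) := by
    have h6' : δ*α = α*δ - (q - q⁻¹) • (β*γ) := by rw [h6]; abel
    rw [h6', hαδ]
    module
  -- monomial reduction lemmas (right-associated words)
  have r1 : α*(α*δ) = α + q • (α*(β*γ)) := by
    rw [hαδ, mul_add, mul_one, mul_smul_comm]
  have r2 : α*(β*δ) = q • β + (q*q) • (β*(β*γ)) := by
    rw [h4, mul_smul_comm, ← mul_assoc, hαδ, add_mul, one_mul, smul_mul_assoc,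
      mul_assoc, ← h3, smul_add, smul_smul]
  have r3 : α*(γ*β) = α*(β*γ) := by rw [← h3]
  have r4 : β*(δ*β) = q⁻¹ • (β*(β*δ)) := by rw [hδβ, mul_smul_comm]
  have r5 : β*(γ*β) = β*(β*γ) := by rw [← h3]
  have r6 : α*(γ*α) = q⁻¹ • (α*(α*γ)) := by rw [hγα, mul_smul_comm]
  have r7 : β*(δ*α) = β + q⁻¹ • (β*(β*γ)) := by
    rw [hδα, mul_add, mul_one, mul_smul_comm]
  have r8 : β*(γ*α) = (q⁻¹*q⁻¹) • (α*(β*γ)) := by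
    rw [hγα, mul_smul_comm, ← mul_assoc, hβα, smul_mul_assoc, mul_assoc, smul_smul]
  -- the key algebraic identity
  have key : (xiE q s α β - s • (1:A)) * (s • γ - δ)
      + (etaE q s γ δ + s • (1:A)) * 0
      + zetaE q s α β γ δ * (β - s • α)
      = β - s • α + s • δ - (s^2) • γ := by
    simp only [xiE, zetaE, mul_zero, add_zero, pow_two, sub_mul, add_mul, mul_sub,
      mul_add, smul_mul_assoc, mul_smul_comm, smul_smul, one_mul, mul_one, mul_assoc]
    rw [r1, r2, r3, r4, r5, r6, r7, r8]
    match_scalars <;> field_simp <;> ring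
  -- the tensor computation
  have main : Δ (δ - s • γ) - (δ - s • γ) ⊗ₜ[k] (δ - s • γ)
      = γ ⊗ₜ[k] (β - s • α + s • δ - (s^2) • γ) := by
    rw [map_sub, map_smul, hΔδ, hΔγ]
    simp only [TensorProduct.tmul_sub, TensorProduct.sub_tmul, TensorProduct.tmul_add,
      TensorProduct.add_tmul, TensorProduct.smul_tmul, TensorProduct.tmul_smul,
      smul_smul]
    module
  rw [main]
  apply Submodule.subset_span
  exact ⟨γ, β - s • α + s • δ - (s^2) • γ,
    ⟨s • γ - δ, 0, β - s • α, key.symm⟩, rfl⟩
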